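/- arXiv:1306.5637 — 2 statements merged into one kernel-verified Lean document; each statement's English description precedes it below -/
import Mathlib

section
/- In C_{3k+1}, any two nonadjacent distinct vertices have at least C(2k,k) common neighbors, where C(2k,k) is the central binomial coefficient. -/
open Finset

private lemma card_symmDiff_aux {α : Type*} [DecidableEq α] (s t : Finset α) :
    (symmDiff s t).card + 2 * (s ∩ t).card = s.card + t.card := by
  have h1 : (symmDiff s t) = (s \ t) ∪ (t \ s) := rfl
  have hdisj : Disjoint (s \ t) (t \ s) := disjoint_sdiff_sdiff
  have e1 := Finset.card_sdiff_add_card_inter s t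
  have e2 := Finset.card_sdiff_add_card_inter t s
  have hinter : (t ∩ s).card = (s ∩ t).card := by rw [Finset.inter_comm]
  rw [h1, Finset.card_union_of_disjoint hdisj]
  omega

private def flipv {n : ℕ} (x : Fin n → ZMod 2) (F : Finset (Fin n)) : Fin n → ZMod 2 :=
  fun i => x i + if i ∈ F then 1 else 0

private lemma flipv_inj {n : ℕ} (x : Fin n → ZMod 2) : Function.Injective (flipv x) := by
  intro F G h
  ext i
  have h1 := congrFun h i
  simp only [flipv] at h1
  have h2 : (if i ∈ F then (1 : ZMod 2) else 0) = (if i ∈ G then 1 else 0) :=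
    add_left_cancel h1
  by_cases hF : i ∈ F <;> by_cases hG : i ∈ G <;> simp [hF, hG] at h2 ⊢

private lemma hamming_flipv {n : ℕ} (x y : Fin n → ZMod 2) (F : Finset (Fin n)) :
    hammingDist (flipv x F) y
      = (symmDiff F (Finset.univ.filter fun i => x i ≠ y i)).card := by
  have : hammingDist (flipv x F) y
      = (Finset.univ.filter fun i => flipv x F i ≠ y i).card := rfl
  rw [this]
  congr 1
  ext i
  simp only [Finset.mem_filter, Finset.mem_univ, true_and, Finset.mem_symmDiff]
  simp only [Finset.mem_filter, Finset.mem_univ, true_and, Finset.mem_symmDiff, flipv]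
  have hz : ∀ a b : ZMod 2, (a + 1 ≠ b ↔ a = b) := by decide
  by_cases hF : i ∈ F
  · simp only [hF, if_pos, hz, true_and, not_true, and_false, or_false]
    tauto
  · simp only [hF, if_neg, not_false_iff, add_zero, false_and, true_and, false_or]
    tauto

/-- The graph `C_{3k+1}`: vertices are vectors in `(Z/2)^{3k+1}`,
adjacent iff their Hamming distance is at least `2k+1`. -/
def hypercubeGraph (k : ℕ) : SimpleGraph (Fin (3 * k + 1) → ZMod 2) where
  Adj x y := 2 * k + 1 ≤ hammingDist x y
  symm := by constructor; intro x y h; rwa [hammingDist_comm]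
  loopless := by constructor; intro x h; rw [hammingDist_self] at h; omega

theorem stmt_4 (k : ℕ) (hk : 0 < k) (x y : Fin (3 * k + 1) → ZMod 2)
    (hxy : x ≠ y) (nxy : ¬ (hypercubeGraph k).Adj x y) :
    Nat.choose (2 * k) k ≤
      {v | (hypercubeGraph k).Adj v x ∧ (hypercubeGraph k).Adj v y}.ncard := by
  classical
  set D : Finset (Fin (3 * k + 1)) := Finset.univ.filter (fun i => x i ≠ y i) with hDdef
  have hDcard : D.card = hammingDist x y := rfl
  have hd1 : 1 ≤ D.card := by
    have hpos : 0 < hammingDist x y := hammingDist_pos.mpr hxy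
    omega
  have hd2 : D.card ≤ 2 * k := by
    have nxy' : ¬ (2 * k + 1 ≤ hammingDist x y) := nxy
    omega
  -- pick E ⊆ Dᶜ with |E| = 2k - d
  have hcompl : (2 * k - D.card) ≤ Dᶜ.card := by
    rw [Finset.card_compl]
    simp only [Fintype.card_fin]
    omega
  obtain ⟨E, hEsub, hEcard⟩ := Finset.exists_subset_card_eq hcompl
  have hDE : Disjoint D E := by
    rw [Finset.disjoint_right]
    intro i hiE hiD
    exact (Finset.mem_compl.mp (hEsub hiE)) hiD
  set W : Finset (Fin (3 * k + 1)) := D ∪ E with hWdef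
  have hW : W.card = 2 * k := by
    rw [hWdef, Finset.card_union_of_disjoint hDE, hEcard]
    omega
  have hDW : D ⊆ W := Finset.subset_union_left
  set R : Finset (Fin (3 * k + 1)) := Wᶜ with hRdef
  have hR : R.card = k + 1 := by
    rw [hRdef, Finset.card_compl, hW]
    simp only [Fintype.card_fin]
    omega
  have hRW : Disjoint R W := by
    rw [hRdef]
    exact disjoint_compl_left
  -- the mapping from k-subsets of W to flip sets
  set Φ : Finset (Fin (3 * k + 1)) → Finset (Fin (3 * k + 1)) :=
    fun S => if 2 * (S ∩ D).card ≤ D.card then S ∪ R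
             else symmDiff ((W \ S) ∪ R) D with hΦdef
  -- basic facts for S ⊆ W with |S| = k
  have hcard_union : ∀ S : Finset (Fin (3 * k + 1)), S ⊆ W → (S ∪ R).card = S.card + (k + 1) := by
    intro S hS
    rw [Finset.card_union_of_disjoint (hRW.mono_right hS).symm, hR]
  have hinterD : ∀ S : Finset (Fin (3 * k + 1)), S ⊆ W → (S ∪ R) ∩ D = S ∩ D := by
    intro S hS
    ext i
    simp only [Finset.mem_inter, Finset.mem_union]
    constructor
    · rintro ⟨hiSR | hiR, hiD⟩
      · exact ⟨hiSR, hiD⟩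
      · exact absurd (hDW hiD) (Finset.mem_compl.mp hiR)
    · rintro ⟨hiS, hiD⟩; exact ⟨Or.inl hiS, hiD⟩
  have hrecover : ∀ S : Finset (Fin (3 * k + 1)), S ⊆ W → (S ∪ R) ∩ W = S := by
    intro S hS
    ext i
    simp only [Finset.mem_inter, Finset.mem_union]
    constructor
    · rintro ⟨hiSR | hiR, hiW⟩
      · exact hiSR
      · exact absurd hiW (Finset.mem_compl.mp hiR)
    · intro hiS; exact ⟨Or.inl hiS, hS hiS⟩
  -- key cardinality facts
  have keyx : ∀ S : Finset (Fin (3 * k + 1)), S ∈ Finset.powersetCard k W →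
      2 * k + 1 ≤ (Φ S).card ∧ 2 * k + 1 ≤ (symmDiff (Φ S) D).card := by
    intro S hS
    rw [Finset.mem_powersetCard] at hS
    obtain ⟨hSW, hSc⟩ := hS
    have haD : (S ∩ D).card ≤ D.card := Finset.card_le_card (Finset.inter_subset_right)
    by_cases hbr : 2 * (S ∩ D).card ≤ D.card
    · have hΦS : Φ S = S ∪ R := by rw [hΦdef]; simp only [hbr, if_pos]
      have h1 : (S ∪ R).card = 2 * k + 1 := by rw [hcard_union S hSW, hSc]; omega
      have h2 := card_symmDiff_aux (S ∪ R) D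
      rw [hinterD S hSW, h1] at h2
      constructor
      · rw [hΦS, h1]
      · rw [hΦS]; omega
    · have hΦS : Φ S = symmDiff ((W \ S) ∪ R) D := by rw [hΦdef]; simp only [hbr, if_neg, not_false_iff]
      have hWS : (W \ S) ⊆ W := Finset.sdiff_subset
      have hWSc : (W \ S).card = k := by
        rw [Finset.card_sdiff_of_subset hSW, hW, hSc]; omega
      have h1 : ((W \ S) ∪ R).card = 2 * k + 1 := by rw [hcard_union _ hWS, hWSc]; omega
      have hintD : ((W \ S) ∪ R) ∩ D = D \ S := by
        rw [hinterD _ hWS]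
        ext i
        simp only [Finset.mem_inter, Finset.mem_sdiff]
        constructor
        · rintro ⟨⟨hiW, hiS⟩, hiD⟩; exact ⟨hiD, hiS⟩
        · rintro ⟨hiD, hiS⟩; exact ⟨⟨hDW hiD, hiS⟩, hiD⟩
      have hDScard : (D \ S).card + (S ∩ D).card = D.card := by
        have := Finset.card_sdiff_add_card_inter D S
        rwa [Finset.inter_comm D S] at this
      have h2 := card_symmDiff_aux ((W \ S) ∪ R) D
      rw [hintD, h1] at h2
      constructor
      · rw [hΦS]; omega
      · rw [hΦS, symmDiff_symmDiff_cancel_right, h1]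
  -- injectivity of Φ on k-subsets of W
  have Φinj : Set.InjOn Φ ↑(Finset.powersetCard k W) := by
    intro S1 hS1 S2 hS2 heq
    rw [Finset.mem_coe, Finset.mem_powersetCard] at hS1 hS2
    obtain ⟨hS1W, hS1c⟩ := hS1
    obtain ⟨hS2W, hS2c⟩ := hS2
    have hc1 : (S1 ∪ R).card = 2 * k + 1 := by rw [hcard_union S1 hS1W, hS1c]; omega
    have hc2 : (S2 ∪ R).card = 2 * k + 1 := by rw [hcard_union S2 hS2W, hS2c]; omega
    have hbig : ∀ S : Finset (Fin (3 * k + 1)), S ⊆ W → S.card = k →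
        ¬ (2 * (S ∩ D).card ≤ D.card) →
        2 * k + 2 ≤ (symmDiff ((W \ S) ∪ R) D).card := by
      intro S hSW hSc hbr
      have hWS : (W \ S) ⊆ W := Finset.sdiff_subset
      have hWSc : (W \ S).card = k := by rw [Finset.card_sdiff_of_subset hSW, hW, hSc]; omega
      have h1 : ((W \ S) ∪ R).card = 2 * k + 1 := by rw [hcard_union _ hWS, hWSc]; omega
      have hintD : ((W \ S) ∪ R) ∩ D = D \ S := by
        rw [hinterD _ hWS]
        ext i
        simp only [Finset.mem_inter, Finset.mem_sdiff]
        constructor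
        · rintro ⟨⟨hiW, hiS⟩, hiD⟩; exact ⟨hiD, hiS⟩
        · rintro ⟨hiD, hiS⟩; exact ⟨⟨hDW hiD, hiS⟩, hiD⟩
      have hDScard : (D \ S).card + (S ∩ D).card = D.card := by
        have := Finset.card_sdiff_add_card_inter D S
        rwa [Finset.inter_comm D S] at this
      have haD : (S ∩ D).card ≤ D.card := Finset.card_le_card (Finset.inter_subset_right)
      have h2 := card_symmDiff_aux ((W \ S) ∪ R) D
      rw [hintD, h1] at h2
      omega
    by_cases c1 : 2 * (S1 ∩ D).card ≤ D.card <;> by_cases c2 : 2 * (S2 ∩ D).card ≤ D.card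
    · -- both branch 1
      simp only [hΦdef, c1, c2, if_pos] at heq
      have := congrArg (· ∩ W) heq
      simpa [hrecover S1 hS1W, hrecover S2 hS2W] using this
    · -- mixed: contradiction by cards
      exfalso
      simp only [hΦdef, c1, c2, if_pos, if_neg, not_false_iff] at heq
      have := congrArg Finset.card heq
      rw [hc1] at this
      have h2 := hbig S2 hS2W hS2c c2
      omega
    · exfalso
      simp only [hΦdef, c1, c2, if_pos, if_neg, not_false_iff] at heq
      have := congrArg Finset.card heq
      rw [hc2] at this
      have h1 := hbig S1 hS1W hS1c c1
      omega
    · -- both branch 2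
      simp only [hΦdef, c1, c2, if_neg, not_false_iff] at heq
      have heq2 : (W \ S1) ∪ R = (W \ S2) ∪ R := by
        have := congrArg (fun t => symmDiff t D) heq
        simpa only [symmDiff_symmDiff_cancel_right] using this
      have heq3 : W \ S1 = W \ S2 := by
        have := congrArg (· ∩ W) heq2
        simpa [hrecover _ (Finset.sdiff_subset (s := W) (t := S1)),
               hrecover _ (Finset.sdiff_subset (s := W) (t := S2))] using this
      have := congrArg (W \ ·) heq3
      simpa [Finset.sdiff_sdiff_eq_self hS1W, Finset.sdiff_sdiff_eq_self hS2W] using this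
  -- assemble
  set T : Finset (Fin (3 * k + 1) → ZMod 2) := (Finset.powersetCard k W).image (fun S => flipv x (Φ S)) with hTdef
  have hTcard : T.card = Nat.choose (2 * k) k := by
    rw [hTdef, Finset.card_image_of_injOn
        (fun S1 h1 S2 h2 h => Φinj h1 h2 (flipv_inj x h)),
      Finset.card_powersetCard, hW]
  have hTsub : ↑T ⊆ {v : Fin (3 * k + 1) → ZMod 2 | (hypercubeGraph k).Adj v x ∧ (hypercubeGraph k).Adj v y} := by
    intro v hv
    rw [Finset.mem_coe, hTdef, Finset.mem_image] at hv
    obtain ⟨S, hS, rfl⟩ := hv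
    obtain ⟨hkx, hky⟩ := keyx S hS
    constructor
    · show 2 * k + 1 ≤ hammingDist (flipv x (Φ S)) x
      have : hammingDist (flipv x (Φ S)) x = (symmDiff (Φ S) (Finset.univ.filter fun i => x i ≠ x i)).card :=
        hamming_flipv x x (Φ S)
      rw [this]
      have hempty : (Finset.univ.filter fun i : Fin (3 * k + 1) => x i ≠ x i) = ∅ := by
        ext i; simp
      rw [hempty, show (∅ : Finset (Fin (3 * k + 1))) = ⊥ from rfl, symmDiff_bot]
      exact hkx
    · show 2 * k + 1 ≤ hammingDist (flipv x (Φ S)) y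
      rw [hamming_flipv x y (Φ S)]
      exact hky
  calc Nat.choose (2 * k) k = T.card := hTcard.symm
    _ = (↑T : Set (Fin (3 * k + 1) → ZMod 2)).ncard := (Set.ncard_coe_finset T).symm
    _ ≤ _ := Set.ncard_le_ncard hTsub (Set.toFinite _)
end

section
/- In C_{3k+1}, for any two distinct vertices x, y at even Hamming distance 2t (1 ≤ t ≤ k), the number of common neighbors of x and y is at least C(3k+1−2t, k−t)·C(2t, t), and this quantity is minimized over t ∈ {1,...,k} at t = k, where it equals C(2k,k). -/
lemma zmod2_add_one_ne : ∀ a : ZMod 2, a + 1 ≠ a := by decide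

lemma zmod2_ne_imp : ∀ a b : ZMod 2, a ≠ b → b = a + 1 := by decide

/-- Key multiplicative identity for binomial coefficients. -/
lemma chooseA (n r : ℕ) :
    Nat.choose (n + 2) (r + 1) * ((r + 1) * (n + 1 - r)) =
      (n + 2) * (n + 1) * Nat.choose n r := by
  have h1 := Nat.add_one_mul_choose_eq (n + 1) r
  have h2 := Nat.choose_mul_succ_eq n r
  calc Nat.choose (n + 2) (r + 1) * ((r + 1) * (n + 1 - r))
      = (Nat.choose (n + 1 + 1) (r + 1) * (r + 1)) * (n + 1 - r) := by ring
    _ = ((n + 1 + 1) * Nat.choose (n + 1) r) * (n + 1 - r) := by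
        rw [← h1]
    _ = (n + 2) * (Nat.choose (n + 1) r * (n + 1 - r)) := by ring
    _ = (n + 2) * (Nat.choose n r * (n + 1)) := by rw [← h2]
    _ = (n + 2) * (n + 1) * Nat.choose n r := by ring

lemma chooseB (n r : ℕ) (hr : r ≤ n)
    (h : 4 * ((r + 1) * (n + 1 - r)) ≤ (n + 2) * (n + 1)) :
    4 * Nat.choose n r ≤ Nat.choose (n + 2) (r + 1) := by
  have hpos : 0 < (r + 1) * (n + 1 - r) := by
    apply Nat.mul_pos <;> omega
  have key : (4 * Nat.choose n r) * ((r + 1) * (n + 1 - r)) ≤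
      Nat.choose (n + 2) (r + 1) * ((r + 1) * (n + 1 - r)) := by
    calc (4 * Nat.choose n r) * ((r + 1) * (n + 1 - r))
        = 4 * ((r + 1) * (n + 1 - r)) * Nat.choose n r := by ring
      _ ≤ (n + 2) * (n + 1) * Nat.choose n r := Nat.mul_le_mul_right _ h
      _ = Nat.choose (n + 2) (r + 1) * ((r + 1) * (n + 1 - r)) := (chooseA n r).symm
  exact Nat.le_of_mul_le_mul_right key hpos

lemma central_step (t : ℕ) : Nat.choose (2 * t + 2) (t + 1) ≤ 4 * Nat.choose (2 * t) t := by
  have hA := chooseA (2 * t) t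
  have hsub : 2 * t + 1 - t = t + 1 := by omega
  rw [hsub] at hA
  have hle : Nat.choose (2 * t + 2) (t + 1) * ((t + 1) * (t + 1)) ≤
      (4 * Nat.choose (2 * t) t) * ((t + 1) * (t + 1)) := by
    rw [hA]
    have : (2 * t + 2) * (2 * t + 1) ≤ 4 * ((t + 1) * (t + 1)) := by nlinarith
    calc (2 * t + 2) * (2 * t + 1) * Nat.choose (2 * t) t
        ≤ 4 * ((t + 1) * (t + 1)) * Nat.choose (2 * t) t := Nat.mul_le_mul_right _ this
      _ = (4 * Nat.choose (2 * t) t) * ((t + 1) * (t + 1)) := by ring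
  have hpos : 0 < (t + 1) * (t + 1) := by positivity
  exact Nat.le_of_mul_le_mul_right hle hpos

lemma step (k t : ℕ) (ht1 : 1 ≤ t) (ht2 : t + 1 ≤ k) :
    Nat.choose (3 * k + 1 - 2 * (t + 1)) (k - (t + 1)) * Nat.choose (2 * (t + 1)) (t + 1) ≤
      Nat.choose (3 * k + 1 - 2 * t) (k - t) * Nat.choose (2 * t) t := by
  obtain ⟨u, hu⟩ : ∃ u, k = t + u + 1 := ⟨k - t - 1, by omega⟩
  subst hu
  -- abbreviate values
  have e1 : 3 * (t + u + 1) + 1 - 2 * (t + 1) = t + 3 * u + 2 := by omega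
  have e2 : t + u + 1 - (t + 1) = u := by omega
  have e3 : 3 * (t + u + 1) + 1 - 2 * t = t + 3 * u + 4 := by omega
  have e4 : t + u + 1 - t = u + 1 := by omega
  have e5 : 2 * (t + 1) = 2 * t + 2 := by omega
  rw [e1, e2, e3, e4, e5]
  -- first: C(2t+2, t+1) ≤ 4 * C(2t, t)
  have h1 := central_step t
  -- second: 4 * C(t+3u+2, u) ≤ C(t+3u+4, u+1)
  have h2 : 4 * Nat.choose (t + 3 * u + 2) u ≤ Nat.choose (t + 3 * u + 4) (u + 1) := by
    have := chooseB (t + 3 * u + 2) u (by omega) ?_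
    · convert this using 2
    · have hsub : t + 3 * u + 2 + 1 - u = t + 2 * u + 3 := by omega
      rw [hsub]
      nlinarith [sq_nonneg (t + u)]
  calc Nat.choose (t + 3 * u + 2) u * Nat.choose (2 * t + 2) (t + 1)
      ≤ Nat.choose (t + 3 * u + 2) u * (4 * Nat.choose (2 * t) t) :=
        Nat.mul_le_mul_left _ h1
    _ = (4 * Nat.choose (t + 3 * u + 2) u) * Nat.choose (2 * t) t := by ring
    _ ≤ Nat.choose (t + 3 * u + 4) (u + 1) * Nat.choose (2 * t) t :=
        Nat.mul_le_mul_right _ h2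

lemma part2aux (k : ℕ) : ∀ d t, k = t + d → 1 ≤ t →
    Nat.choose (2 * k) k ≤
      Nat.choose (3 * k + 1 - 2 * t) (k - t) * Nat.choose (2 * t) t := by
  intro d
  induction d with
  | zero =>
    intro t hkt _
    have : t = k := by omega
    subst this
    have e1 : 3 * t + 1 - 2 * t = t + 1 := by omega
    have e2 : t - t = 0 := by omega
    rw [e1, e2, Nat.choose_zero_right, one_mul]
  | succ d ih =>
    intro t hkt ht1
    calc Nat.choose (2 * k) k
        ≤ Nat.choose (3 * k + 1 - 2 * (t + 1)) (k - (t + 1)) *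
            Nat.choose (2 * (t + 1)) (t + 1) := ih (t + 1) (by omega) (by omega)
      _ ≤ Nat.choose (3 * k + 1 - 2 * t) (k - t) * Nat.choose (2 * t) t :=
          step k t ht1 (by omega)

theorem stmt_19 (k : ℕ) (hk : 0 < k) :
    (∀ x y : Fin (3 * k + 1) → ZMod 2, ∀ t : ℕ, 1 ≤ t → t ≤ k →
      x ≠ y → hammingDist x y = 2 * t →
      Nat.choose (3 * k + 1 - 2 * t) (k - t) * Nat.choose (2 * t) t ≤
        {v | (hypercubeGraph k).Adj v x ∧ (hypercubeGraph k).Adj v y}.ncard) ∧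
    (∀ t : ℕ, 1 ≤ t → t ≤ k →
      Nat.choose (2 * k) k ≤
        Nat.choose (3 * k + 1 - 2 * t) (k - t) * Nat.choose (2 * t) t) ∧
    Nat.choose (3 * k + 1 - 2 * k) (k - k) * Nat.choose (2 * k) k =
      Nat.choose (2 * k) k := by
  refine ⟨?_, ?_, ?_⟩
  · -- counting part
    intro x y t ht1 ht2 hxy hd
    classical
    set D : Finset (Fin (3 * k + 1)) := Finset.univ.filter (fun i => x i ≠ y i) with hDdef
    have hDcard : D.card = 2 * t := hd
    have hScard : Dᶜ.card = 3 * k + 1 - 2 * t := by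
      rw [Finset.card_compl, hDcard]
      simp
    set T : Finset (Fin (3 * k + 1) → ZMod 2) :=
      Finset.univ.filter (fun v => (hypercubeGraph k).Adj v x ∧ (hypercubeGraph k).Adj v y)
      with hTdef
    have hset : {v | (hypercubeGraph k).Adj v x ∧ (hypercubeGraph k).Adj v y} = (↑T : Set _) := by
      ext v; simp [hTdef]
    rw [hset, Set.ncard_coe_finset]
    set P := (Dᶜ.powersetCard (2 * k + 1 - t)) ×ˢ (D.powersetCard t) with hPdef
    have hPcard : P.card =
        Nat.choose (3 * k + 1 - 2 * t) (k - t) * Nat.choose (2 * t) t := by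
      rw [hPdef, Finset.card_product, Finset.card_powersetCard, Finset.card_powersetCard,
        hScard, hDcard]
      congr 1
      have hle : 2 * k + 1 - t ≤ 3 * k + 1 - 2 * t := by omega
      have := Nat.choose_symm (n := 3 * k + 1 - 2 * t) (k := 2 * k + 1 - t) hle
      have he : 3 * k + 1 - 2 * t - (2 * k + 1 - t) = k - t := by omega
      rw [he] at this
      exact this.symm
    rw [← hPcard]
    set F : Finset (Fin (3 * k + 1)) × Finset (Fin (3 * k + 1)) → (Fin (3 * k + 1) → ZMod 2) :=
      fun p => fun i => x i + (if i ∈ p.1 ∪ p.2 then 1 else 0) with hFdef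
    apply Finset.card_le_card_of_injOn F
    · -- maps into T
      rintro ⟨A, B⟩ hp
      rw [Finset.mem_coe, hPdef, Finset.mem_product, Finset.mem_powersetCard, Finset.mem_powersetCard] at hp
      obtain ⟨⟨hAS, hAcard⟩, hBD, hBcard⟩ := hp
      have hAnotD : ∀ i ∈ A, i ∉ D := fun i hi => Finset.mem_compl.mp (hAS hi)
      have hdx : hammingDist (F (A, B)) x = 2 * k + 1 := by
        have hfilter : Finset.univ.filter (fun i => F (A, B) i ≠ x i) = A ∪ B := by
          ext i
          simp only [Finset.mem_filter, Finset.mem_univ, true_and, hFdef]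
          by_cases hi : i ∈ A ∪ B
          · rw [if_pos hi]
            simp only [hi, iff_true]
            exact fun h => zmod2_add_one_ne (x i) h
          · rw [if_neg hi]
            simp [hi]
        have : hammingDist (F (A, B)) x = (A ∪ B).card := by
          rw [hammingDist]; exact congrArg Finset.card hfilter
        rw [this, Finset.card_union_of_disjoint, hAcard, hBcard]
        · omega
        · exact Finset.disjoint_left.mpr (fun i hiA hiB => hAnotD i hiA (hBD hiB))
      have hdy : hammingDist (F (A, B)) y = 2 * k + 1 := by
        have hfilter : Finset.univ.filter (fun i => F (A, B) i ≠ y i) = A ∪ (D \ B) := by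
          ext i
          simp only [Finset.mem_filter, Finset.mem_univ, true_and, hFdef]
          constructor
          · intro hne
            by_cases hiA : i ∈ A
            · exact Finset.mem_union.mpr (Or.inl hiA)
            · by_cases hiB : i ∈ B
              · exfalso
                have hiD : i ∈ D := hBD hiB
                have hxyi : x i ≠ y i := by
                  have := Finset.mem_filter.mp hiD; exact this.2
                have hy1 : y i = x i + 1 := zmod2_ne_imp _ _ hxyi
                have hmem : i ∈ A ∪ B := Finset.mem_union.mpr (Or.inr hiB)
                rw [if_pos hmem] at hne
                exact hne (by rw [hy1])
              · have hmem : i ∉ A ∪ B := by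
                  simp [hiA, hiB]
                rw [if_neg hmem, add_zero] at hne
                refine Finset.mem_union.mpr (Or.inr (Finset.mem_sdiff.mpr ⟨?_, hiB⟩))
                exact Finset.mem_filter.mpr ⟨Finset.mem_univ i, hne⟩
          · intro h
            rcases Finset.mem_union.mp h with hiA | hsd
            · have hmem : i ∈ A ∪ B := Finset.mem_union.mpr (Or.inl hiA)
              rw [if_pos hmem]
              have hxyi : x i = y i := by
                have := hAS hiA
                rw [Finset.mem_compl, hDdef, Finset.mem_filter] at this
                push_neg at this
                exact this (Finset.mem_univ i)
              rw [← hxyi]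
              exact zmod2_add_one_ne (x i)
            · obtain ⟨hiD, hiB⟩ := Finset.mem_sdiff.mp hsd
              have hiA : i ∉ A := fun h => hAnotD i h hiD
              have hmem : i ∉ A ∪ B := by simp [hiA, hiB]
              rw [if_neg hmem, add_zero]
              have := Finset.mem_filter.mp hiD
              exact this.2
        have : hammingDist (F (A, B)) y = (A ∪ (D \ B)).card := by
          rw [hammingDist]; exact congrArg Finset.card hfilter
        rw [this, Finset.card_union_of_disjoint, hAcard, Finset.card_sdiff_of_subset hBD, hDcard, hBcard]
        · omega
        · exact Finset.disjoint_left.mpr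
            (fun i hiA hi => hAnotD i hiA (Finset.mem_sdiff.mp hi).1)
      rw [Finset.mem_coe, hTdef, Finset.mem_filter]
      refine ⟨Finset.mem_univ _, ?_, ?_⟩
      · show 2 * k + 1 ≤ hammingDist (F (A, B)) x
        omega
      · show 2 * k + 1 ≤ hammingDist (F (A, B)) y
        omega
    · -- injectivity
      rintro ⟨A, B⟩ hp ⟨A', B'⟩ hp' heq
      rw [Finset.mem_coe, Finset.mem_product, Finset.mem_powersetCard,
        Finset.mem_powersetCard] at hp hp'
      obtain ⟨⟨hAS, _⟩, hBD, _⟩ := hp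
      obtain ⟨⟨hAS', _⟩, hBD', _⟩ := hp'
      have hmemiff : ∀ i, i ∈ A ∪ B ↔ i ∈ A' ∪ B' := by
        intro i
        have := congrFun heq i
        simp only [hFdef] at this
        have h2 : (if i ∈ A ∪ B then (1 : ZMod 2) else 0) =
            (if i ∈ A' ∪ B' then (1 : ZMod 2) else 0) := by
          exact add_left_cancel this
        by_cases h : i ∈ A ∪ B <;> by_cases h' : i ∈ A' ∪ B' <;>
          simp [h, h'] at h2 ⊢
      have hAeq : A = A' := by
        ext i
        constructor
        · intro hi
          have hiD : i ∉ D := Finset.mem_compl.mp (hAS hi)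
          have := (hmemiff i).mp (Finset.mem_union.mpr (Or.inl hi))
          rcases Finset.mem_union.mp this with h | h
          · exact h
          · exact absurd (hBD' h) hiD
        · intro hi
          have hiD : i ∉ D := Finset.mem_compl.mp (hAS' hi)
          have := (hmemiff i).mpr (Finset.mem_union.mpr (Or.inl hi))
          rcases Finset.mem_union.mp this with h | h
          · exact h
          · exact absurd (hBD h) hiD
      have hBeq : B = B' := by
        ext i
        constructor
        · intro hi
          have hiD : i ∈ D := hBD hi
          have := (hmemiff i).mp (Finset.mem_union.mpr (Or.inr hi))
          rcases Finset.mem_union.mp this with h | h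
          · exact absurd hiD (Finset.mem_compl.mp (hAS' h))
          · exact h
        · intro hi
          have hiD : i ∈ D := hBD' hi
          have := (hmemiff i).mpr (Finset.mem_union.mpr (Or.inr hi))
          rcases Finset.mem_union.mp this with h | h
          · exact absurd hiD (Finset.mem_compl.mp (hAS h))
          · exact h
      rw [Prod.mk.injEq]
      exact ⟨hAeq, hBeq⟩
  · -- monotonicity part
    intro t ht1 ht2
    exact part2aux k (k - t) t (by omega) ht1
  · -- equality at t = k
    have e1 : 3 * k + 1 - 2 * k = k + 1 := by omega
    have e2 : k - k = 0 := by omega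
    rw [e1, e2, Nat.choose_zero_right, one_mul]
end
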